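/- Let P be a positive integer and n \ge 1. If T^k(P) is odd for every k with 0 \le k < n, then 2^n divides P + 1 and T^n(P) = 3^n \cdot (P+1) / 2^n - 1. -/

import Mathlib

open Filter

/-- The (accelerated) Collatz map `T(P) = P/2` if `P` even, `(3P+1)/2` if `P` odd. -/
def collatz (p : ℕ) : ℕ := if p % 2 = 0 then p / 2 else (3 * p + 1) / 2

/-- `collatzOddCount P n = m_n(P)`, the number of `k < n` with `T^k(P)` odd. -/
def collatzOddCount (P n : ℕ) : ℕ :=
  ((Finset.range n).filter fun k => collatz^[k] P % 2 = 1).card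

/-- The principal coefficient `A_n(P) = 3^{m_n(P)} / 2^n`. -/
noncomputable def collatzA (P n : ℕ) : ℝ := 3 ^ collatzOddCount P n / 2 ^ n

/-- The adjustment coefficient `B_n(P) = T^n(P) - A_n(P) * P`. -/
noncomputable def collatzB (P n : ℕ) : ℝ := (collatz^[n] P : ℝ) - collatzA P n * P

lemma collatz_key (P : ℕ) (n : ℕ) (hodd : ∀ k < n, collatz^[k] P % 2 = 1) :
    2 ^ n * (collatz^[n] P + 1) = 3 ^ n * (P + 1) := by
  induction n with
  | zero => simp
  | succ n ih =>
    have ih' := ih (fun k hk => hodd k (Nat.lt_succ_of_lt hk))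
    have ho : collatz^[n] P % 2 = 1 := hodd n (Nat.lt_succ_self n)
    rw [Function.iterate_succ_apply']
    have hc : collatz (collatz^[n] P) = (3 * collatz^[n] P + 1) / 2 := by
      rw [collatz, ho]; simp
    obtain ⟨q, hq⟩ := Nat.odd_iff.mpr ho
    rw [hc, hq]
    have h2 : (3 * (2 * q + 1) + 1) / 2 = 3 * q + 2 := by omega
    rw [h2]
    rw [hq] at ih'
    rw [pow_succ, pow_succ]
    nlinarith [ih']

theorem stmt_14 (P : ℕ) (hP : 0 < P) (n : ℕ) (hn : 1 ≤ n)
    (hodd : ∀ k < n, collatz^[k] P % 2 = 1) :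
    2 ^ n ∣ P + 1 ∧ collatz^[n] P = 3 ^ n * (P + 1) / 2 ^ n - 1 := by
  have key := collatz_key P n hodd
  have hcop : Nat.Coprime (2 ^ n) (3 ^ n) :=
    Nat.Coprime.pow n n (by norm_num)
  have hdvd : 2 ^ n ∣ P + 1 := by
    have h1 : 2 ^ n ∣ 3 ^ n * (P + 1) := ⟨_, key.symm⟩
    exact hcop.dvd_of_dvd_mul_left h1
  refine ⟨hdvd, ?_⟩
  obtain ⟨m, hm⟩ := hdvd
  have h2 : (0:ℕ) < 2 ^ n := Nat.pow_pos (by norm_num)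
  rw [hm] at key ⊢
  have hdiv : 3 ^ n * (2 ^ n * m) / 2 ^ n = 3 ^ n * m := by
    rw [mul_comm (2^n) m, ← mul_assoc, Nat.mul_div_cancel _ h2]
  rw [hdiv]
  have : 2 ^ n * (collatz^[n] P + 1) = 2 ^ n * (3 ^ n * m) := by
    rw [key]; ring
  have := Nat.eq_of_mul_eq_mul_left h2 this
  omega
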